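/- Let J be a stable zerodimensional monomial ideal in k[x₁,x₂,x₃] with escalier data ρ_{i,j} = |{a : x₁ᵃx₂^{j-1}x₃^{i-1} ∈ N(J)}|, k the number of nonzero rows and βᵢ the number of nonzero entries in row i. Then the star set (equivalently the minimal generating set) of J is exactly { x₃ᵏ } ∪ { x₂^{βᵢ}x₃^{i-1} : 1 ≤ i ≤ k } ∪ { x₁^{ρ_{i,j}}x₂^{j-1}x₃^{i-1} : 1 ≤ i ≤ k, 1 ≤ j ≤ βᵢ }. -/
import Mathlib


def MonomialIdeal {n : ℕ} (I : Set (Fin n → ℕ)) : Prop :=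
  ∀ τ ∈ I, ∀ σ : Fin n → ℕ, τ + σ ∈ I

def IsStable {n : ℕ} (I : Set (Fin n → ℕ)) : Prop :=
  ∀ τ ∈ I, ∀ m j : Fin n, τ m ≠ 0 → (∀ l, l < m → τ l = 0) → m < j →
    τ - Pi.single m 1 + Pi.single j 1 ∈ I

def starSet {n : ℕ} (I : Set (Fin n → ℕ)) : Set (Fin n → ℕ) :=
  {τ | τ ∈ I ∧ ∃ m : Fin n, τ m ≠ 0 ∧ (∀ l, l < m → τ l = 0) ∧
    τ - Pi.single m 1 ∉ I}

def mon3 (a b c : ℕ) : Fin 3 → ℕ := ![a, b, c]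

lemma downIff (s : Set ℕ) (hf : s.Finite) (hd : ∀ ⦃a b : ℕ⦄, a ∈ s → b ≤ a → b ∈ s)
    (a : ℕ) : a ∈ s ↔ a < Nat.card s := by
  rcases s.eq_empty_or_nonempty with h | h
  · simp [h]
  · have hM := hf.toFinset.max'_mem (by simpa using h)
    set M := hf.toFinset.max' (by simpa using h) with hMdef
    have hs : s = Set.Iic M := by
      ext x
      constructor
      · intro hx; exact Finset.le_max' _ _ (hf.mem_toFinset.2 hx)
      · intro hx; exact hd (hf.mem_toFinset.1 hM) hx
    rw [hs, Nat.card_eq_card_toFinset]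
    simp [Nat.lt_succ_iff]

lemma mon3_sub0 (a b c : ℕ) : mon3 a b c - Pi.single (0 : Fin 3) 1 = mon3 (a-1) b c := by
  funext i; fin_cases i <;> simp [mon3, Pi.single]

lemma mon3_sub1 (a b c : ℕ) : mon3 a b c - Pi.single (1 : Fin 3) 1 = mon3 a (b-1) c := by
  funext i; fin_cases i <;> simp [mon3, Pi.single, Function.update]

lemma mon3_sub2 (a b c : ℕ) : mon3 a b c - Pi.single (2 : Fin 3) 1 = mon3 a b (c-1) := by
  funext i; fin_cases i <;> simp [mon3, Pi.single, Function.update]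

lemma mon3_eta (τ : Fin 3 → ℕ) : τ = mon3 (τ 0) (τ 1) (τ 2) := by
  funext i; fin_cases i <;> simp [mon3]

lemma mon3_zero : mon3 0 0 0 = 0 := by
  funext i; fin_cases i <;> simp [mon3]

lemma mon3_decompose {a b c a' b' c' : ℕ} (h1 : a ≤ a') (h2 : b ≤ b') (h3 : c ≤ c') :
    mon3 a' b' c' = mon3 a b c + (mon3 a' b' c' - mon3 a b c) := by
  funext i; fin_cases i <;> simp [mon3] <;> omega

theorem starSet_of_stable_ideal_three_vars
    (J : Set (Fin 3 → ℕ)) (hJ : MonomialIdeal J) (hst : IsStable J)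
    (hfin : {τ : Fin 3 → ℕ | τ ∉ J}.Finite) (h0 : (0 : Fin 3 → ℕ) ∉ J)
    (ρ : ℕ → ℕ → ℕ)
    (hρ : ∀ i j, ρ i j = Nat.card {a : ℕ | mon3 a j i ∉ J})
    (k : ℕ) (hk : k = Nat.card {i : ℕ | ∃ j, 0 < ρ i j})
    (β : ℕ → ℕ) (hβ : ∀ i, β i = Nat.card {j : ℕ | 0 < ρ i j}) :
    starSet J = {τ : Fin 3 → ℕ | τ = mon3 0 0 k} ∪
      {τ : Fin 3 → ℕ | ∃ i < k, τ = mon3 0 (β i) i} ∪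
      {τ : Fin 3 → ℕ | ∃ i < k, ∃ j < β i, τ = mon3 (ρ i j) j i} := by
  have hm3 : ∀ m : Fin 3, m = 0 ∨ m = 1 ∨ m = 2 := by decide
  -- downward closure of the complement
  have hdown : ∀ {a b c a' b' c' : ℕ}, a ≤ a' → b ≤ b' → c ≤ c' →
      mon3 a' b' c' ∉ J → mon3 a b c ∉ J := by
    intro a b c a' b' c' h1 h2 h3 hn hm
    exact hn (by rw [mon3_decompose h1 h2 h3]; exact hJ _ hm _)
  -- the basic criterion
  have hcrit : ∀ a b c, mon3 a b c ∉ J ↔ a < ρ c b := by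
    intro a b c
    rw [hρ]
    refine downIff {x : ℕ | mon3 x b c ∉ J} ?_ ?_ a
    · have : {x : ℕ | mon3 x b c ∉ J} = (fun x => mon3 x b c) ⁻¹' {τ | τ ∉ J} := rfl
      rw [this]
      apply Set.Finite.preimage _ hfin
      intro x _ y _ hxy
      simpa [mon3] using congrFun hxy 0
    · intro x y hx hyx
      exact hdown hyx le_rfl le_rfl hx
  have hmem : ∀ a b c, mon3 a b c ∈ J ↔ ρ c b ≤ a := by
    intro a b c
    rw [← not_lt, ← hcrit]
    exact not_not.symm
  -- characterization of β
  have hβiff : ∀ i j, j < β i ↔ 0 < ρ i j := by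
    intro i j
    rw [hβ]
    refine (downIff {j : ℕ | 0 < ρ i j} ?_ ?_ j).symm
    · have : {j : ℕ | 0 < ρ i j} = (fun j => mon3 0 j i) ⁻¹' {τ | τ ∉ J} := by
        ext j; simp only [Set.mem_setOf_eq, Set.mem_preimage]
        rw [hcrit]
      rw [this]
      apply Set.Finite.preimage _ hfin
      intro x _ y _ hxy
      simpa [mon3] using congrFun hxy 1
    · intro x y hx hyx
      simp only [Set.mem_setOf_eq, ← hcrit] at hx ⊢
      exact hdown le_rfl hyx le_rfl hx
  -- characterization of k
  have hkiff : ∀ i, i < k ↔ 0 < ρ i 0 := by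
    intro i
    rw [hk]
    have hset : {i : ℕ | ∃ j, 0 < ρ i j} = {i : ℕ | 0 < ρ i 0} := by
      ext i
      simp only [Set.mem_setOf_eq]
      constructor
      · rintro ⟨j, hj⟩
        rw [← hcrit] at hj ⊢
        exact hdown le_rfl (Nat.zero_le _) le_rfl hj
      · intro h; exact ⟨0, h⟩
    rw [hset]
    refine (downIff {i : ℕ | 0 < ρ i 0} ?_ ?_ i).symm
    · have : {i : ℕ | 0 < ρ i 0} = (fun i => mon3 0 0 i) ⁻¹' {τ | τ ∉ J} := by
        ext i; simp only [Set.mem_setOf_eq, Set.mem_preimage]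
        rw [hcrit]
      rw [this]
      apply Set.Finite.preimage _ hfin
      intro x _ y _ hxy
      simpa [mon3] using congrFun hxy 2
    · intro x y hx hyx
      simp only [Set.mem_setOf_eq, ← hcrit] at hx ⊢
      exact hdown le_rfl le_rfl hyx hx
  have hck : ∀ c j, 0 < ρ c j → c < k := by
    intro c j h
    rw [hkiff, ← hcrit]
    rw [← hcrit] at h
    exact hdown le_rfl (Nat.zero_le _) le_rfl h
  have hk0 : 0 < k := (hkiff 0).2 ((hcrit 0 0 0).1 (by rw [mon3_zero]; exact h0))
  ext τ
  obtain ⟨a, b, c, rfl⟩ : ∃ a b c, τ = mon3 a b c := ⟨τ 0, τ 1, τ 2, mon3_eta τ⟩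
  simp only [starSet, Set.mem_setOf_eq, Set.mem_union]
  constructor
  · rintro ⟨hmemJ, m, hm0, hmin, hnot⟩
    rcases hm3 m with rfl | rfl | rfl
    · -- m = 0
      have ha : a ≠ 0 := by simpa [mon3] using hm0
      rw [mon3_sub0] at hnot
      have h1 : ρ c b ≤ a := (hmem a b c).1 hmemJ
      have h2 : a - 1 < ρ c b := (hcrit _ _ _).1 hnot
      have hab : a = ρ c b := by omega
      exact Or.inr ⟨c, hck c b (by omega), b, (hβiff c b).2 (by omega), by rw [hab]⟩
    · -- m = 1
      have ha : a = 0 := by simpa [mon3] using hmin 0 (by decide)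
      have hb : b ≠ 0 := by simpa [mon3] using hm0
      rw [mon3_sub1] at hnot
      subst ha
      have h1 : ρ c b = 0 := by have := (hmem 0 b c).1 hmemJ; omega
      have h2 : 0 < ρ c (b - 1) := (hcrit _ _ _).1 hnot
      have hbβ : b = β c := by
        have e1 : ¬ b < β c := by rw [hβiff]; omega
        have e2 : b - 1 < β c := (hβiff c (b-1)).2 h2
        omega
      exact Or.inl (Or.inr ⟨c, hck c (b-1) h2, by rw [hbβ]⟩)
    · -- m = 2
      have ha : a = 0 := by simpa [mon3] using hmin 0 (by decide)
      have hb : b = 0 := by simpa [mon3] using hmin 1 (by decide)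
      have hc : c ≠ 0 := by simpa [mon3] using hm0
      rw [mon3_sub2] at hnot
      subst ha; subst hb
      have h1 : ρ c 0 = 0 := by have := (hmem 0 0 c).1 hmemJ; omega
      have h2 : 0 < ρ (c - 1) 0 := (hcrit _ _ _).1 hnot
      have hckk : c = k := by
        have e1 : ¬ c < k := by rw [hkiff]; omega
        have e2 : c - 1 < k := (hkiff (c-1)).2 h2
        omega
      exact Or.inl (Or.inl (by rw [hckk]))
  · rintro ((h | ⟨i, hik, h⟩) | ⟨i, hik, j, hjβ, h⟩) <;> rw [h]
    · -- τ = mon3 0 0 k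
      have hρk : ρ k 0 = 0 := by
        have : ¬ 0 < ρ k 0 := by rw [← hkiff]; omega
        omega
      refine ⟨(hmem 0 0 k).2 (by omega), 2, ?_, ?_, ?_⟩
      · simpa [mon3] using hk0.ne'
      · intro l hl
        rcases hm3 l with rfl | rfl | rfl
        · simp [mon3]
        · simp [mon3]
        · exact absurd hl (by decide)
      · rw [mon3_sub2]
        exact (hcrit 0 0 (k-1)).2 ((hkiff (k-1)).1 (by omega))
    · -- τ = mon3 0 (β i) i
      have hβpos : 0 < β i := by rw [hβiff, ← hkiff]; exact hik
      have hρβ : ρ i (β i) = 0 := by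
        have : ¬ β i < β i := lt_irrefl _
        rw [hβiff] at this
        omega
      refine ⟨(hmem 0 (β i) i).2 (by omega), 1, ?_, ?_, ?_⟩
      · simpa [mon3] using hβpos.ne'
      · intro l hl
        rcases hm3 l with rfl | rfl | rfl
        · simp [mon3]
        · exact absurd hl (by decide)
        · exact absurd hl (by decide)
      · rw [mon3_sub1]
        exact (hcrit 0 (β i - 1) i).2 ((hβiff i (β i - 1)).1 (by omega))
    · -- τ = mon3 (ρ i j) j i
      have hρpos : 0 < ρ i j := (hβiff i j).1 hjβ
      refine ⟨(hmem _ _ _).2 le_rfl, 0, ?_, ?_, ?_⟩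
      · simpa [mon3] using hρpos.ne'
      · intro l hl
        exact absurd hl (by simp [Fin.lt_def])
      · rw [mon3_sub0]
        exact (hcrit _ _ _).2 (by omega)
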